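/- Let f : ℂ → ℂ be an entire function that is not a polynomial (i.e., f is transcendental). Then the set E = { g : ℂ → ℂ entire : ∫_ℂ |g(z)|² (1 + |f′(z)|²)^{−2} dA(z) < ∞ }, where dA is Lebesgue measure on ℂ ≅ ℝ², is a complex vector subspace of the space of entire functions, and E is infinite-dimensional over ℂ. -/

import Mathlib

open MeasureTheory

section Aux

open Polynomial Module

/-- Iterated difference quotients of `φ` at `0`. -/
noncomputable def psiAux (φ : ℂ → ℂ) : ℕ → ℂ → ℂ
  | 0 => φ
  | k+1 => dslope (psiAux φ k) 0

/-- The polynomial parts subtracted off by the iterated difference quotients. -/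
noncomputable def pkAux (φ : ℂ → ℂ) : ℕ → Polynomial ℂ
  | 0 => 0
  | k+1 => pkAux φ k + Polynomial.C (psiAux φ k 0) * Polynomial.X ^ k

lemma psiAux_diff {φ : ℂ → ℂ} (hφ : Differentiable ℂ φ) : ∀ k, Differentiable ℂ (psiAux φ k)
  | 0 => hφ
  | (k+1) => differentiableOn_univ.mp
      ((Complex.differentiableOn_dslope (by simp)).mpr (psiAux_diff hφ k).differentiableOn)

lemma psiAux_key (φ : ℂ → ℂ) : ∀ k, ∀ z : ℂ, z ^ k * psiAux φ k z = φ z - (pkAux φ k).eval z := by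
  intro k
  induction k with
  | zero => intro z; simp [psiAux, pkAux]
  | succ k ih =>
    intro z
    have hd : z * dslope (psiAux φ k) 0 z = psiAux φ k z - psiAux φ k 0 := by
      simpa using sub_smul_dslope (psiAux φ k) 0 z
    have h1 : z ^ (k+1) * psiAux φ (k+1) z = z ^ k * (z * dslope (psiAux φ k) 0 z) := by
      rw [psiAux]; ring
    rw [h1, hd, mul_sub, ih z, pkAux]
    simp only [eval_add, eval_mul, eval_C, eval_pow, eval_X]
    ring

lemma pkAux_bound (φ : ℂ → ℂ) :
    ∀ k, ∃ M : ℝ, 0 ≤ M ∧ ∀ z : ℂ, 1 ≤ ‖z‖ → ‖(pkAux φ (k+1)).eval z‖ ≤ M * ‖z‖ ^ k := by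
  intro k
  induction k with
  | zero =>
    refine ⟨‖psiAux φ 0 0‖, norm_nonneg _, fun z hz => ?_⟩
    simp [pkAux]
  | succ k ih =>
    obtain ⟨M, hM0, hM⟩ := ih
    refine ⟨M + ‖psiAux φ (k+1) 0‖, by positivity, fun z hz => ?_⟩
    have hz0 : (0:ℝ) < ‖z‖ := lt_of_lt_of_le one_pos hz
    calc ‖(pkAux φ (k+2)).eval z‖
        ≤ ‖(pkAux φ (k+1)).eval z‖ + ‖psiAux φ (k+1) 0‖ * ‖z‖ ^ (k+1) := by
          rw [pkAux]
          simp only [eval_add, eval_mul, eval_C, eval_pow, eval_X]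
          refine (norm_add_le _ _).trans ?_
          gcongr
          simp [norm_pow]
      _ ≤ M * ‖z‖ ^ k + ‖psiAux φ (k+1) 0‖ * ‖z‖ ^ (k+1) := add_le_add (hM z hz) le_rfl
      _ ≤ (M + ‖psiAux φ (k+1) 0‖) * ‖z‖ ^ (k+1) := by
          rw [add_mul]
          have : M * ‖z‖ ^ k ≤ M * ‖z‖ ^ (k+1) :=
            mul_le_mul_of_nonneg_left (pow_le_pow_right₀ hz (Nat.le_succ k)) hM0
          linarith

lemma psiAux_bound (φ : ℂ → ℂ) (k : ℕ) :
    ∃ M : ℝ, 0 ≤ M ∧ ∀ z : ℂ, 1 ≤ ‖z‖ → ‖psiAux φ (k+1) z‖ * ‖z‖ ≤ ‖φ z‖ + M := by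
  obtain ⟨M, hM0, hM⟩ := pkAux_bound φ k
  refine ⟨M, hM0, fun z hz => ?_⟩
  have hz0 : (0:ℝ) < ‖z‖ := lt_of_lt_of_le one_pos hz
  have hpk : (0:ℝ) < ‖z‖ ^ k := pow_pos hz0 k
  rw [← mul_le_mul_iff_left₀ hpk]
  have hnorm : ‖z ^ (k+1) * psiAux φ (k+1) z‖ = ‖φ z - (pkAux φ (k+1)).eval z‖ := by
    rw [psiAux_key φ (k+1) z]
  have h1 : ‖psiAux φ (k+1) z‖ * ‖z‖ * ‖z‖ ^ k = ‖z ^ (k+1) * psiAux φ (k+1) z‖ := by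
    rw [norm_mul, norm_pow]; ring
  rw [h1, hnorm]
  calc ‖φ z - (pkAux φ (k+1)).eval z‖ ≤ ‖φ z‖ + ‖(pkAux φ (k+1)).eval z‖ := norm_sub_le _ _
    _ ≤ ‖φ z‖ + M * ‖z‖ ^ k := by gcongr; exact hM z hz
    _ ≤ (‖φ z‖ + M) * ‖z‖ ^ k := by
        rw [add_mul]
        gcongr
        nlinarith [norm_nonneg (φ z), one_le_pow₀ hz (n := k)]

lemma poly_of_poly_mul_eq {φ : ℂ → ℂ} (hφ : Differentiable ℂ φ) :
    ∀ n : ℕ, ∀ A B : Polynomial ℂ, A.natDegree ≤ n → A ≠ 0 →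
      (∀ z, A.eval z * φ z = B.eval z) → ∃ Q : Polynomial ℂ, ∀ z, φ z = Q.eval z := by
  intro n
  induction n with
  | zero =>
    intro A B hdeg hA hEq
    have hAC : A = Polynomial.C (A.coeff 0) := A.eq_C_of_natDegree_eq_zero (Nat.le_zero.mp hdeg)
    have ha : A.coeff 0 ≠ 0 := fun h => hA (by rw [hAC, h, map_zero])
    refine ⟨Polynomial.C (A.coeff 0)⁻¹ * B, fun z => ?_⟩
    have h := hEq z
    rw [hAC] at h
    simp only [eval_C, eval_mul] at h ⊢
    rw [← h]
    field_simp
  | succ n ih =>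
    intro A B hdeg hA hEq
    by_cases h0 : A.natDegree = 0
    · exact ih A B (by omega) hA hEq
    · obtain ⟨r, hr⟩ := Complex.exists_root (f := A) (by
        rw [Polynomial.degree_eq_natDegree hA]
        exact_mod_cast Nat.pos_of_ne_zero h0)
      obtain ⟨A₁, hA₁⟩ := Polynomial.dvd_iff_isRoot.mpr hr
      have hBr : B.IsRoot r := by
        have h := hEq r
        rw [Polynomial.IsRoot.def] at hr ⊢
        rw [hr, zero_mul] at h
        exact h.symm
      obtain ⟨B₁, hB₁⟩ := Polynomial.dvd_iff_isRoot.mpr hBr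
      have hA₁ne : A₁ ≠ 0 := by
        rintro rfl
        rw [mul_zero] at hA₁
        exact hA hA₁
      have hdeg₁ : A₁.natDegree ≤ n := by
        have hXr : (Polynomial.X - Polynomial.C r) ≠ 0 := Polynomial.X_sub_C_ne_zero r
        have h := Polynomial.natDegree_mul hXr hA₁ne
        rw [← hA₁, Polynomial.natDegree_X_sub_C] at h
        omega
      refine ih A₁ B₁ hdeg₁ hA₁ne ?_
      have hEq' : Set.EqOn (fun z => A₁.eval z * φ z) (fun z => B₁.eval z) {r}ᶜ := by
        intro z hz
        have hzr : z - r ≠ 0 := sub_ne_zero.mpr hz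
        have h := hEq z
        rw [hA₁, hB₁] at h
        simp only [eval_mul, eval_sub, eval_X, eval_C] at h
        have h' : (z - r) * (A₁.eval z * φ z) = (z - r) * B₁.eval z := by
          rw [← h]; ring
        exact mul_left_cancel₀ hzr h'
      have hfun : (fun z => A₁.eval z * φ z) = fun z => B₁.eval z := by
        refine Continuous.ext_on (dense_compl_singleton r) ?_ ?_ hEq'
        · exact A₁.continuous_aeval.mul hφ.continuous
        · exact B₁.continuous_aeval
      exact fun z => congrFun hfun z

lemma exists_antideriv (Q : Polynomial ℂ) : ∃ R : Polynomial ℂ, R.derivative = Q := by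
  induction Q using Polynomial.induction_on' with
  | add p q hp hq =>
    obtain ⟨P, hP⟩ := hp; obtain ⟨P', hQ⟩ := hq; exact ⟨P + P', by simp [hP, hQ]⟩
  | monomial n a =>
    refine ⟨Polynomial.monomial (n+1) (a / (n+1)), ?_⟩
    rw [Polynomial.derivative_monomial]
    simp only [Nat.add_sub_cancel, Nat.cast_add, Nat.cast_one]
    rw [div_mul_cancel₀]
    exact Nat.cast_add_one_ne_zero n

lemma deriv_not_poly {f : ℂ → ℂ} (hf : Differentiable ℂ f)
    (htrans : ¬ ∃ p : Polynomial ℂ, ∀ z, f z = p.eval z) :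
    ∀ Q : Polynomial ℂ, ¬ (∀ z, deriv f z = Q.eval z) := by
  intro Q hQ
  obtain ⟨R, hR⟩ := exists_antideriv Q
  have hdiff : Differentiable ℂ (fun z => f z - R.eval z) := hf.sub R.differentiable
  have hderiv : ∀ z, deriv (fun z => f z - R.eval z) z = 0 := by
    intro z
    rw [deriv_fun_sub (hf z) (R.differentiable z), Polynomial.deriv, hR, hQ z, sub_self]
  have hconst : ∀ z : ℂ, f z - R.eval z = f 0 - R.eval 0 :=
    fun z => is_const_of_deriv_eq_zero hdiff hderiv z 0
  refine htrans ⟨R + Polynomial.C (f 0 - R.eval 0), fun z => ?_⟩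
  have h := hconst z
  simp only [eval_add, eval_C]
  linear_combination h

lemma integrable_of_decay {F : ℂ → ℝ} (hF : Continuous F) (hFnn : ∀ z, 0 ≤ F z) (K : ℝ)
    (hK : ∀ z : ℂ, 1 ≤ ‖z‖ → F z ≤ K / ‖z‖ ^ 4) : Integrable F := by
  obtain ⟨C, hC⟩ := (isCompact_closedBall (0:ℂ) 1).exists_bound_of_continuousOn hF.continuousOn
  set M : ℝ := max K C + 1 with hM
  have hC0 : (0:ℝ) ≤ C := le_trans (le_trans (hFnn 0) (le_abs_self _)) (hC 0 (by simp))
  have hM0 : (0:ℝ) < M := by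
    have : (0:ℝ) ≤ max K C := le_trans hC0 (le_max_right K C)
    linarith
  have hint : Integrable (fun z : ℂ => (16 * M) * (1 + ‖z‖) ^ (-(4:ℝ))) := by
    refine (integrable_one_add_norm ?_).const_mul _
    rw [Complex.finrank_real_complex]; norm_num
  refine hint.mono' hF.aestronglyMeasurable (Filter.Eventually.of_forall fun z => ?_)
  have h1z : (0:ℝ) < 1 + ‖z‖ := by positivity
  have hrpow : ((1:ℝ) + ‖z‖) ^ (-(4:ℝ)) = ((1 + ‖z‖) ^ (4:ℕ))⁻¹ := by
    rw [← Real.rpow_natCast (1 + ‖z‖) 4, ← Real.rpow_neg h1z.le]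
    norm_num
  rw [Real.norm_of_nonneg (hFnn z), hrpow]
  have hp4 : (0:ℝ) < (1 + ‖z‖) ^ (4:ℕ) := by positivity
  rcases le_or_gt ‖z‖ 1 with hz | hz
  · have hFz : F z ≤ C :=
      le_trans (le_abs_self _) (hC z (by simpa [Metric.mem_closedBall, Complex.dist_eq] using hz))
    have hpow : ((1:ℝ) + ‖z‖) ^ (4:ℕ) ≤ 16 := by
      have h2 : ((1:ℝ) + ‖z‖) ^ (4:ℕ) ≤ 2 ^ (4:ℕ) :=
        pow_le_pow_left₀ (by positivity) (by linarith) 4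
      have h3 : (2:ℝ) ^ (4:ℕ) = 16 := by norm_num
      linarith
    calc F z ≤ C := hFz
      _ ≤ M := by have := le_max_right K C; linarith
      _ = (16 * M) * (16:ℝ)⁻¹ := by ring
      _ ≤ (16 * M) * ((1 + ‖z‖) ^ (4:ℕ))⁻¹ := by
          refine mul_le_mul_of_nonneg_left ?_ (by linarith)
          exact inv_anti₀ hp4 hpow
  · have hz' : (1:ℝ) ≤ ‖z‖ := hz.le
    have hz4 : (0:ℝ) < ‖z‖ ^ 4 := by positivity
    have hpow : ((1:ℝ) + ‖z‖) ^ (4:ℕ) ≤ 16 * ‖z‖ ^ 4 := by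
      have h2 : ((1:ℝ) + ‖z‖) ^ (4:ℕ) ≤ (2 * ‖z‖) ^ (4:ℕ) :=
        pow_le_pow_left₀ (by positivity) (by linarith) 4
      calc ((1:ℝ) + ‖z‖) ^ (4:ℕ) ≤ (2 * ‖z‖) ^ (4:ℕ) := h2
        _ = 16 * ‖z‖ ^ 4 := by ring
    calc F z ≤ K / ‖z‖ ^ 4 := hK z hz'
      _ ≤ M / ‖z‖ ^ 4 := by
          have hKM : K ≤ M := by have := le_max_left K C; linarith
          gcongr
      _ ≤ (16 * M) * ((1 + ‖z‖) ^ (4:ℕ))⁻¹ := by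
          rw [div_eq_mul_inv, ← div_eq_mul_inv, ← div_eq_mul_inv, div_le_div_iff₀ hz4 hp4]
          calc M * (1 + ‖z‖) ^ (4:ℕ) ≤ M * (16 * ‖z‖ ^ 4) :=
                mul_le_mul_of_nonneg_left hpow hM0.le
            _ = 16 * M * ‖z‖ ^ 4 := by ring

end Aux

/-- Theorem 1.12 of the paper (the assertion `P_{3,L²}(Γ(f)) = ∞`): if `f` is a transcendental
entire function on `ℂ`, then the set of entire functions `g` with
`∫_ℂ |g|² (1+|f′|²)^{−2} dA < ∞` is a complex vector subspace of `ℂ → ℂ`, and it is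
infinite-dimensional over `ℂ`. -/
theorem stmt_8 (f : ℂ → ℂ) (hf : Differentiable ℂ f)
    (htrans : ¬ ∃ p : Polynomial ℂ, ∀ z, f z = p.eval z) :
    ∃ E : Submodule ℂ (ℂ → ℂ),
      (E : Set (ℂ → ℂ)) = {g | Differentiable ℂ g ∧
        Integrable (fun z : ℂ => ‖g z‖ ^ 2 / (1 + ‖deriv f z‖ ^ 2) ^ 2)} ∧
      ¬ FiniteDimensional ℂ E := by
  classical
  have hφ : Differentiable ℂ (deriv f) :=
    differentiableOn_univ.mp
      ((hf.differentiableOn.analyticOnNhd isOpen_univ).deriv).differentiableOn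
  have hφc : Continuous (deriv f) := hφ.continuous
  set S : Set (ℂ → ℂ) := {g | Differentiable ℂ g ∧
      Integrable (fun z : ℂ => ‖g z‖ ^ 2 / (1 + ‖deriv f z‖ ^ 2) ^ 2)} with hSdef
  have hDpos : ∀ z : ℂ, (0:ℝ) < (1 + ‖deriv f z‖ ^ 2) ^ 2 := fun z => by positivity
  have hDcont : Continuous fun z : ℂ => (1 + ‖deriv f z‖ ^ 2) ^ 2 :=
    ((continuous_const.add (hφc.norm.pow 2)).pow 2)
  have hIcont : ∀ g : ℂ → ℂ, Continuous g →
      Continuous (fun z : ℂ => ‖g z‖ ^ 2 / (1 + ‖deriv f z‖ ^ 2) ^ 2) := by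
    intro g hg
    exact (hg.norm.pow 2).div hDcont fun z => (hDpos z).ne'
  -- S is closed under the module operations
  have hzeroS : (0 : ℂ → ℂ) ∈ S := by
    constructor
    · exact differentiable_const 0
    · have h0 : (fun z : ℂ => ‖(0 : ℂ → ℂ) z‖ ^ 2 / (1 + ‖deriv f z‖ ^ 2) ^ 2)
          = fun _ : ℂ => (0:ℝ) := by
        funext z; simp
      rw [h0]
      exact integrable_zero _ _ _
  have haddS : ∀ {a b : ℂ → ℂ}, a ∈ S → b ∈ S → a + b ∈ S := by
    intro a b ha hb
    refine ⟨ha.1.add hb.1, ?_⟩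
    have hmeas : AEStronglyMeasurable
        (fun z : ℂ => ‖(a + b) z‖ ^ 2 / (1 + ‖deriv f z‖ ^ 2) ^ 2) volume :=
      (hIcont _ (ha.1.add hb.1).continuous).aestronglyMeasurable
    have hint : Integrable (fun z : ℂ =>
        2 * (‖a z‖ ^ 2 / (1 + ‖deriv f z‖ ^ 2) ^ 2) +
        2 * (‖b z‖ ^ 2 / (1 + ‖deriv f z‖ ^ 2) ^ 2)) :=
      (ha.2.const_mul 2).add (hb.2.const_mul 2)
    refine hint.mono' hmeas (Filter.Eventually.of_forall fun z => ?_)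
    have hnum : ‖a z + b z‖ ^ 2 ≤ 2 * ‖a z‖ ^ 2 + 2 * ‖b z‖ ^ 2 := by
      have h1 : ‖a z + b z‖ ≤ ‖a z‖ + ‖b z‖ := norm_add_le _ _
      nlinarith [norm_nonneg (a z + b z), norm_nonneg (a z), norm_nonneg (b z),
        sq_nonneg (‖a z‖ - ‖b z‖)]
    have hnn : (0:ℝ) ≤ ‖(a + b) z‖ ^ 2 / (1 + ‖deriv f z‖ ^ 2) ^ 2 := by positivity
    rw [Real.norm_of_nonneg hnn]
    have : ‖(a + b) z‖ ^ 2 / (1 + ‖deriv f z‖ ^ 2) ^ 2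
        ≤ (2 * ‖a z‖ ^ 2 + 2 * ‖b z‖ ^ 2) / (1 + ‖deriv f z‖ ^ 2) ^ 2 := by
      gcongr
      simpa using hnum
    refine this.trans (le_of_eq ?_)
    field_simp
  have hsmulS : ∀ (c : ℂ) {a : ℂ → ℂ}, a ∈ S → c • a ∈ S := by
    intro c a ha
    refine ⟨ha.1.const_smul c, ?_⟩
    have h1 : (fun z : ℂ => ‖(c • a) z‖ ^ 2 / (1 + ‖deriv f z‖ ^ 2) ^ 2)
        = fun z : ℂ => ‖c‖ ^ 2 * (‖a z‖ ^ 2 / (1 + ‖deriv f z‖ ^ 2) ^ 2) := by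
      funext z
      simp only [Pi.smul_apply, norm_smul, mul_pow, mul_div_assoc]
    rw [h1]
    exact ha.2.const_mul _
  set E : Submodule ℂ (ℂ → ℂ) :=
    { carrier := S
      add_mem' := haddS
      zero_mem' := hzeroS
      smul_mem' := hsmulS } with hEdef
  refine ⟨E, rfl, ?_⟩
  intro hFin
  set n : ℕ := Module.finrank ℂ E + 1 with hn
  -- the family of elements
  set G : Fin n → (ℂ → ℂ) :=
    fun i => fun z => psiAux (deriv f) 1 z * psiAux (deriv f) (i.val + 1) z with hGdef
  -- each G i lies in S
  have hGS : ∀ k : ℕ,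
      (fun z => psiAux (deriv f) 1 z * psiAux (deriv f) (k + 1) z) ∈ S := by
    intro k
    have hdiff : Differentiable ℂ
        (fun z => psiAux (deriv f) 1 z * psiAux (deriv f) (k + 1) z) :=
      (psiAux_diff hφ 1).mul (psiAux_diff hφ (k+1))
    refine ⟨hdiff, ?_⟩
    obtain ⟨M1, hM10, hM1⟩ := psiAux_bound (deriv f) 0
    obtain ⟨Mk, hMk0, hMk⟩ := psiAux_bound (deriv f) k
    refine integrable_of_decay (hIcont _ hdiff.continuous) (fun z => by positivity)
      (4 * (1 + M1 ^ 2) * (1 + Mk ^ 2)) (fun z hz => ?_)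
    have hz0 : (0:ℝ) < ‖z‖ := lt_of_lt_of_le one_pos hz
    have hz4 : (0:ℝ) < ‖z‖ ^ 4 := by positivity
    rw [div_le_div_iff₀ (hDpos z) hz4]
    have h1 : ‖psiAux (deriv f) 1 z‖ * ‖z‖ ≤ ‖deriv f z‖ + M1 := hM1 z hz
    have h2 : ‖psiAux (deriv f) (k+1) z‖ * ‖z‖ ≤ ‖deriv f z‖ + Mk := hMk z hz
    have ha : (‖psiAux (deriv f) 1 z‖ * ‖z‖) ^ 2 ≤ (‖deriv f z‖ + M1) ^ 2 :=
      pow_le_pow_left₀ (by positivity) h1 2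
    have hb : (‖psiAux (deriv f) (k+1) z‖ * ‖z‖) ^ 2 ≤ (‖deriv f z‖ + Mk) ^ 2 :=
      pow_le_pow_left₀ (by positivity) h2 2
    have hc : (‖deriv f z‖ + M1) ^ 2 ≤ 2 * (1 + M1 ^ 2) * (1 + ‖deriv f z‖ ^ 2) := by
      nlinarith [sq_nonneg (‖deriv f z‖ - M1), sq_nonneg (M1 * ‖deriv f z‖)]
    have hd : (‖deriv f z‖ + Mk) ^ 2 ≤ 2 * (1 + Mk ^ 2) * (1 + ‖deriv f z‖ ^ 2) := by
      nlinarith [sq_nonneg (‖deriv f z‖ - Mk), sq_nonneg (Mk * ‖deriv f z‖)]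
    have hlhs : ‖psiAux (deriv f) 1 z * psiAux (deriv f) (k+1) z‖ ^ 2 * ‖z‖ ^ 4
        = (‖psiAux (deriv f) 1 z‖ * ‖z‖) ^ 2 * (‖psiAux (deriv f) (k+1) z‖ * ‖z‖) ^ 2 := by
      rw [norm_mul]; ring
    rw [hlhs]
    calc (‖psiAux (deriv f) 1 z‖ * ‖z‖) ^ 2 * (‖psiAux (deriv f) (k+1) z‖ * ‖z‖) ^ 2
        ≤ (‖deriv f z‖ + M1) ^ 2 * (‖deriv f z‖ + Mk) ^ 2 := by
          exact mul_le_mul ha hb (by positivity) (by positivity)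
      _ ≤ (2 * (1 + M1 ^ 2) * (1 + ‖deriv f z‖ ^ 2)) *
            (2 * (1 + Mk ^ 2) * (1 + ‖deriv f z‖ ^ 2)) := by
          exact mul_le_mul hc hd (by positivity) (by positivity)
      _ = 4 * (1 + M1 ^ 2) * (1 + Mk ^ 2) * (1 + ‖deriv f z‖ ^ 2) ^ 2 := by ring
  -- linear independence of the G i in `ℂ → ℂ`
  have hli : LinearIndependent ℂ G := by
    rw [Fintype.linearIndependent_iff]
    intro c hc
    have hpt : ∀ z : ℂ, ∑ i : Fin n,
        c i * (psiAux (deriv f) 1 z * psiAux (deriv f) (i.val + 1) z) = 0 := by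
      intro z
      have h := congrFun hc z
      simpa [hGdef, Finset.sum_apply, Pi.smul_apply, smul_eq_mul] using h
    set S₀ : ℂ → ℂ := fun z => ∑ i : Fin n, c i * psiAux (deriv f) (i.val + 1) z with hS₀def
    have hS₀d : Differentiable ℂ S₀ :=
      Differentiable.fun_sum fun i _ => (psiAux_diff hφ _).const_mul _
    have hprod : ∀ z, psiAux (deriv f) 1 z * S₀ z = 0 := by
      intro z
      rw [hS₀def, Finset.mul_sum, ← hpt z]
      refine Finset.sum_congr rfl fun i _ => by ring
    have hψ1ne : ∃ z₀, psiAux (deriv f) 1 z₀ ≠ 0 := by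
      by_contra h
      push_neg at h
      refine deriv_not_poly hf htrans (pkAux (deriv f) 1) fun z => ?_
      have hk := psiAux_key (deriv f) 1 z
      rw [h z, mul_zero] at hk
      linear_combination -hk
    obtain ⟨z₀, hz₀⟩ := hψ1ne
    have hev : S₀ =ᶠ[nhds z₀] 0 := by
      have hne : ∀ᶠ z in nhds z₀, psiAux (deriv f) 1 z ≠ 0 :=
        ((psiAux_diff hφ 1).continuous.continuousAt).eventually_ne hz₀
      filter_upwards [hne] with z hz
      rcases mul_eq_zero.mp (hprod z) with h | h
      · exact absurd h hz
      · simpa using h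
    have hS₀0 : ∀ z, S₀ z = 0 := by
      have han : AnalyticOnNhd ℂ S₀ Set.univ :=
        hS₀d.differentiableOn.analyticOnNhd isOpen_univ
      have heq := han.eqOn_zero_of_preconnected_of_eventuallyEq_zero
        isPreconnected_univ (Set.mem_univ z₀) hev
      exact fun z => heq (Set.mem_univ z)
    intro i
    by_contra hci
    set A : Polynomial ℂ :=
      ∑ j : Fin n, Polynomial.C (c j) * Polynomial.X ^ (n - 1 - j.val) with hAdef
    set B : Polynomial ℂ :=
      ∑ j : Fin n, Polynomial.C (c j) * Polynomial.X ^ (n - 1 - j.val) *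
        pkAux (deriv f) (j.val + 1) with hBdef
    have hAeval : ∀ z, A.eval z * deriv f z = B.eval z := by
      intro z
      have hzn : z ^ n * S₀ z = 0 := by rw [hS₀0 z, mul_zero]
      have hsum : ∑ j : Fin n, c j * z ^ (n - 1 - j.val) *
          (deriv f z - (pkAux (deriv f) (j.val + 1)).eval z) = 0 := by
        have hterm : ∀ j : Fin n, c j * z ^ (n - 1 - j.val) *
            (deriv f z - (pkAux (deriv f) (j.val + 1)).eval z)
              = c j * (z ^ n * psiAux (deriv f) (j.val + 1) z) := by
          intro j
          have hjn : j.val < n := j.isLt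
          have hexp : (n - 1 - j.val) + (j.val + 1) = n := by omega
          have hzp : z ^ n = z ^ (n - 1 - j.val) * z ^ (j.val + 1) := by
            rw [← pow_add, hexp]
          rw [← psiAux_key (deriv f) (j.val + 1) z, hzp]
          ring
        rw [Finset.sum_congr rfl fun j _ => hterm j,
          Finset.sum_congr rfl fun (j : Fin n) _ => (by ring :
            c j * (z ^ n * psiAux (deriv f) (j.val + 1) z)
              = z ^ n * (c j * psiAux (deriv f) (j.val + 1) z)),
          ← Finset.mul_sum]
        exact hzn
      have hevalA : A.eval z = ∑ j : Fin n, c j * z ^ (n - 1 - j.val) := by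
        rw [hAdef, Polynomial.eval_finset_sum]
        refine Finset.sum_congr rfl fun j _ => by
          simp [Polynomial.eval_mul, Polynomial.eval_pow]
      have hevalB : B.eval z = ∑ j : Fin n,
          c j * z ^ (n - 1 - j.val) * (pkAux (deriv f) (j.val + 1)).eval z := by
        rw [hBdef, Polynomial.eval_finset_sum]
        refine Finset.sum_congr rfl fun j _ => by
          simp [Polynomial.eval_mul, Polynomial.eval_pow]
      rw [hevalA, hevalB, ← sub_eq_zero, Finset.sum_mul, ← Finset.sum_sub_distrib]
      rw [← hsum]
      refine Finset.sum_congr rfl fun j _ => by ring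
    -- A is a nonzero polynomial
    have hAcoeff : A.coeff (n - 1 - i.val) = c i := by
      rw [hAdef, Polynomial.finset_sum_coeff]
      have hterm : ∀ j : Fin n,
          (Polynomial.C (c j) * Polynomial.X ^ (n - 1 - j.val)).coeff (n - 1 - i.val)
            = if n - 1 - i.val = n - 1 - j.val then c j else 0 := by
        intro j
        rw [Polynomial.coeff_C_mul, Polynomial.coeff_X_pow]
        split <;> simp
      rw [Finset.sum_congr rfl fun j _ => hterm j]
      rw [Finset.sum_eq_single i]
      · simp
      · intro j _ hji
        have hj : j.val < n := j.isLt
        have hi : i.val < n := i.isLt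
        have hne : j.val ≠ i.val := fun h => hji (Fin.ext h)
        have hneq : n - 1 - i.val ≠ n - 1 - j.val := by omega
        exact if_neg hneq
      · intro h
        exact absurd (Finset.mem_univ i) h
    have hAne : A ≠ 0 := by
      intro h
      rw [h, Polynomial.coeff_zero] at hAcoeff
      exact hci hAcoeff.symm
    obtain ⟨Q, hQ⟩ := poly_of_poly_mul_eq hφ A.natDegree A B le_rfl hAne hAeval
    exact deriv_not_poly hf htrans Q hQ
  -- conclude: too many independent vectors
  have hmem : ∀ i : Fin n, G i ∈ E := fun i => hGS i.val
  have hvli : LinearIndependent ℂ (fun i : Fin n => (⟨G i, hmem i⟩ : E)) := by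
    apply LinearIndependent.of_comp E.subtype
    exact hli
  have hcard := hvli.fintype_card_le_finrank
  rw [Fintype.card_fin] at hcard
  omega
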